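/- Let β₀ = arctan(1/2) and let V₁, V₂ be two closed right circular bicones (double cones) in ℝ³ with common vertex at the origin, each with half-angle β₀ between axis and generator, whose axes make an angle θ + β₀ with each other where 0 < θ < β₀. If the surfaces of the two cones meet along a common generator, the dihedral angle between the tangent planes to the two cone surfaces along that common generator equals arccos(4 − 5cos(β₀ + θ)). -/

import Mathlib

open Real InnerProductGeometry

noncomputable section

theorem stmt_17 (β₀ θ : ℝ) (hβ₀ : β₀ = Real.arctan (1 / 2))
    (hθ0 : 0 < θ) (hθ : θ < β₀)
    (a₁ a₂ u : EuclideanSpace ℝ (Fin 3))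
    (ha₁ : ‖a₁‖ = 1) (ha₂ : ‖a₂‖ = 1) (hu : ‖u‖ = 1)
    (haxes : (inner ℝ a₁ a₂ : ℝ) = Real.cos (β₀ + θ))
    (hgen₁ : (inner ℝ u a₁ : ℝ) = Real.cos β₀)
    (hgen₂ : (inner ℝ u a₂ : ℝ) = Real.cos β₀) :
    InnerProductGeometry.angle (a₁ - Real.cos β₀ • u) (Real.cos β₀ • u - a₂) =
      Real.arccos (4 - 5 * Real.cos (β₀ + θ)) := by
  set c := Real.cos β₀ with hc
  have hc2 : c ^ 2 = 4 / 5 := by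
    rw [hc, hβ₀, Real.cos_arctan, div_pow, one_pow,
      Real.sq_sqrt (by norm_num : (0:ℝ) ≤ 1 + (1/2:ℝ)^2)]
    norm_num
  have hia : (inner ℝ a₁ u : ℝ) = c := by rw [real_inner_comm]; exact hgen₁
  have h1 : ‖a₁ - c • u‖ ^ 2 = 1 / 5 := by
    rw [norm_sub_sq_real, real_inner_smul_right, hia, norm_smul, ha₁, hu]
    simp only [Real.norm_eq_abs, mul_one, sq_abs]; linear_combination -hc2
  have h2 : ‖c • u - a₂‖ ^ 2 = 1 / 5 := by
    rw [norm_sub_sq_real, real_inner_smul_left, hgen₂, norm_smul, ha₂, hu]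
    simp only [Real.norm_eq_abs, mul_one, sq_abs]; linear_combination -hc2
  have hn1 : ‖a₁ - c • u‖ = Real.sqrt (1 / 5) := by
    rw [← Real.sqrt_sq (norm_nonneg _), h1]
  have hn2 : ‖c • u - a₂‖ = Real.sqrt (1 / 5) := by
    rw [← Real.sqrt_sq (norm_nonneg _), h2]
  have hinner : (inner ℝ (a₁ - c • u) (c • u - a₂) : ℝ) = 4 / 5 - Real.cos (β₀ + θ) := by
    rw [inner_sub_left, inner_sub_right, inner_sub_right, real_inner_smul_right,
      real_inner_smul_left, real_inner_smul_left, real_inner_smul_right,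
      hia, haxes, hgen₂, real_inner_self_eq_norm_sq, hu]
    have : c * (c * 1 ^ 2) = 4 / 5 := by rw [← hc2]; ring
    rw [this]
    have hcc : c * c = 4 / 5 := by rw [← hc2]; ring
    rw [hcc]; ring
  have hss : Real.sqrt (1/5) * Real.sqrt (1/5) = 1/5 :=
    Real.mul_self_sqrt (by norm_num)
  rw [InnerProductGeometry.angle, hinner, hn1, hn2, hss]
  congr 1
  ring
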